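/- arXiv:2302.02753 — 2 statements merged into one kernel-verified Lean document; each statement's English description precedes it below -/
import Mathlib

section
/- The critical eigenfunction χ = χ_{h*} is non-decreasing: for all a ≤ b in ℝ, χ(a) ≤ χ(b). -/
open MeasureTheory ProbabilityTheory Real Set Filter Topology NNReal
open scoped Classical ENNReal

noncomputable section

namespace GFF

/-- Vertex set of the `(d+1)`-regular tree `𝕋`: `none` is the root `o`, and
`some (i, l)` is the vertex reached from the root by first crossing the `i`-th
edge at the root (`i : Fin (d+1)`) and then following the child steps in `l`
(each non-root vertex has `d` children). The fixed neighbour `ō` of the root is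
`some (Fin.last d, [])`. -/
abbrev V (d : ℕ) := Option (Fin (d + 1) × List (Fin d))

variable (d : ℕ)

/-- Graph distance from the root `o`. -/
def depth : V d → ℕ := fun v => v.elim 0 fun p => p.2.length + 1

/-- The geodesic path from the root `o` to `v`, including both endpoints. -/
def pathFromRoot : V d → List (V d)
  | none => [none]
  | some (i, l) => none :: (List.range (l.length + 1)).map fun k => some (i, l.take k)

/-- The forward tree `𝕋⁺`: vertices whose geodesic from `o` does not pass through
the fixed neighbour `ō = some (Fin.last d, [])`. -/
def forward : Set (V d) := {v | v.elim True fun p => p.1 ≠ Fin.last d}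

/-- The variance `σ_ν² = d/(d-1)` of the root field value. -/
def varRoot : ℝ≥0 := (d : ℝ≥0) / ((d : ℝ≥0) - 1)

/-- The variance `σ_Y² = (d+1)/d` of the innovations. -/
def varY : ℝ≥0 := ((d : ℝ≥0) + 1) / (d : ℝ≥0)

/-- The Gaussian free field on `𝕋` with root value `a`, built from the innovations
`ω`; this is the closed form of the recursion `φ_o = a`, `φ_x = φ_{x̄}/d + ω_x`,
where `x̄` is the parent of `x`. -/
def field (a : ℝ) (ω : V d → ℝ) : V d → ℝ
  | none => a
  | some (i, l) =>
      a / (d : ℝ) ^ (l.length + 1) +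
        ∑ k ∈ Finset.range (l.length + 1), ω (some (i, l.take k)) / (d : ℝ) ^ (l.length - k)

variable {Ω : Type} [MeasurableSpace Ω]

/-- `(P, Y)` is an environment for the Gaussian free field on `𝕋`: the `Y_x`,
`x ∈ 𝕋`, are independent centred Gaussians with `Var(Y_o) = d/(d-1)` and
`Var(Y_x) = (d+1)/d` for `x ≠ o`.  Under `P`, the field `field d (Y none ω) (Y · ω)`
then has the law of the GFF on `𝕋` (covariance = Green function), and
`field d a (Y · ω)` has its law conditioned on `φ_o = a`, i.e. `P_a`. -/
structure IsGFFEnv (P : Measure Ω) (Y : V d → Ω → ℝ) : Prop where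
  prob : IsProbabilityMeasure P
  meas : ∀ v, Measurable (Y v)
  indep : iIndepFun (m := fun _ : V d => (inferInstance : MeasurableSpace ℝ)) Y P
  law : ∀ v, P.map (Y v) = gaussianReal 0 (if v = none then varRoot d else varY d)

/-- The connected component `C_o^h` of the root in the level set `{φ ≥ h}`:
on a tree, `v` is connected to `o` in `{φ ≥ h}` iff `φ ≥ h` along the whole
geodesic from `o` to `v`. -/
def cluster (h : ℝ) (φ : V d → ℝ) : Set (V d) :=
  {v | ∀ z ∈ pathFromRoot d v, h ≤ φ z}

/-- The unconditioned field (root value `Y_o`). -/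
def fieldUncond (Y : V d → Ω → ℝ) (ω : Ω) : V d → ℝ :=
  field d (Y none ω) fun v => Y v ω

/-- `η(h,a) = P_a[|C_o^h| = ∞]`. -/
def η (P : Measure Ω) (Y : V d → Ω → ℝ) (h a : ℝ) : ℝ :=
  (P {ω | (cluster d h (field d a fun v => Y v ω)).Infinite}).toReal

/-- `η⁺(h,a) = P_a[|C_o^h ∩ 𝕋⁺| = ∞]`. -/
def ηplus (P : Measure Ω) (Y : V d → Ω → ℝ) (h a : ℝ) : ℝ :=
  (P {ω | (cluster d h (field d a fun v => Y v ω) ∩ forward d).Infinite}).toReal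

/-- The centred Gaussian measure `ν` with variance `d/(d-1)`. -/
def ν : Measure ℝ := gaussianReal 0 (varRoot d)

/-- The centred Gaussian density `ρ_Y` with variance `(d+1)/d`. -/
def ρY : ℝ → ℝ := gaussianPDFReal 0 (varY d)

/-- The operator `L_h` on `L²(ν)`:
`L_h[f](a) = 1_{[h,∞)}(a) · d · ∫_{[h,∞)} f(x) ρ_Y(x − a/d) dx`. -/
def Lop (h : ℝ) (f : ℝ → ℝ) : ℝ → ℝ :=
  (Ici h).indicator fun a => (d : ℝ) * ∫ x in Ici h, f x * ρY d (x - a / d)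

/-- `(hstar, χ)` is the critical pair: `χ = χ_{h*}` is the unique non-negative
unit-`L²(ν)`-norm eigenfunction of `L_{h*}`, continuous and strictly positive on
`[h*,∞)`, vanishing on `(−∞,h*)`, with eigenvalue `λ_{h*} = 1`; this
characterises the critical height `h*` (the unique `h` with `λ_h = 1`). -/
structure IsCriticalPair (hstar : ℝ) (χ : ℝ → ℝ) : Prop where
  cont : ContinuousOn χ (Ici hstar)
  nonneg : ∀ a, 0 ≤ χ a
  pos : ∀ a, hstar ≤ a → 0 < χ a
  zero : ∀ a, a < hstar → χ a = 0
  norm : (∫ a, χ a ^ 2 ∂(ν d)) = 1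
  eigen : ∀ a, Lop d hstar χ a = χ a

/-- The constant `C₁ = Γ(1/2)⁻¹ √( (2d/(d−1)) ⟨1,χ⟩_ν / ⟨χ,χ²⟩_ν )`. -/
def Cone (χ : ℝ → ℝ) : ℝ :=
  (1 / Real.Gamma (1 / 2)) *
    Real.sqrt ((2 * d / (d - 1)) * (∫ a, χ a ∂(ν d)) / (∫ a, χ a ^ 3 ∂(ν d)))

/-- The constant `C₂ = 2 ((d−1)/(d+1)) ⟨Id,χ²⟩_ν / ⟨χ,χ²⟩_ν`. -/
def Ctwo (χ : ℝ → ℝ) : ℝ :=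
  2 * ((d - 1) / (d + 1)) * (∫ a, a * χ a ^ 2 ∂(ν d)) / (∫ a, χ a ^ 3 ∂(ν d))

/-- The critical cluster in the forward tree, `C_o^{h*} ∩ 𝕋⁺`. -/
def fwdCluster (hstar a : ℝ) (Y : V d → Ω → ℝ) (ω : Ω) : Set (V d) :=
  cluster d hstar (field d a fun v => Y v ω) ∩ forward d

/-- The Laplace transform `𝓛_a(s) = E_a[e^{−s|C_o^{h*} ∩ 𝕋⁺|}]` (with
`e^{-s·∞} = 0` for `s > 0` encoded by the `Finite` case split). -/
def laplaceFwd (P : Measure Ω) (Y : V d → Ω → ℝ) (hstar a s : ℝ) : ℝ :=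
  ∫ ω, (if (fwdCluster d hstar a Y ω).Finite
    then Real.exp (-s * (fwdCluster d hstar a Y ω).ncard) else 0) ∂P

/-- The Laplace transform `𝓛̃_a(s) = E_a[e^{−s|C_o^{h*}|}]`. -/
def laplaceFull (P : Measure Ω) (Y : V d → Ω → ℝ) (hstar a s : ℝ) : ℝ :=
  ∫ ω, (if (cluster d hstar (field d a fun v => Y v ω)).Finite
    then Real.exp (-s * (cluster d hstar (field d a fun v => Y v ω)).ncard) else 0) ∂P

/-- `γ_s(a) = 1 − 𝓛_a(s)` for `a ≥ h*`, and `0` for `a < h*`. -/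
def γfun (P : Measure Ω) (Y : V d → Ω → ℝ) (hstar s a : ℝ) : ℝ :=
  if hstar ≤ a then 1 - laplaceFwd d P Y hstar a s else 0

/-- `a₁(s) = ⟨γ_s, χ⟩_ν`. -/
def aone (P : Measure Ω) (Y : V d → Ω → ℝ) (hstar : ℝ) (χ : ℝ → ℝ) (s : ℝ) : ℝ :=
  ∫ a, γfun d P Y hstar s a * χ a ∂(ν d)

/-- The `n`-th generation `Z_n = {x ∈ C_o^{h*} ∩ 𝕋⁺ : d(o,x) = n}`. -/
def gen (hstar a : ℝ) (Y : V d → Ω → ℝ) (ω : Ω) (n : ℕ) : Set (V d) :=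
  {x | x ∈ fwdCluster d hstar a Y ω ∧ depth d x = n}

/-- The shifted Gaussian measure `ν*`, with density `ρ_{ν*}(x) = ρ_ν(x + h*)`. -/
def νstar (hstar : ℝ) : Measure ℝ := gaussianReal (-hstar) (varRoot d)

/-- The operator `H_h[f](a) = ∫_0^∞ f(x) ρ_Y(x − a/d + ((d−1)/d)h) dx` for `a ≥ 0`,
and `0` for `a < 0` (so that `H_h = d⁻¹ θ_h L_h θ_h⁻¹`). -/
def Hop (h : ℝ) (f : ℝ → ℝ) : ℝ → ℝ :=
  (Ici (0:ℝ)).indicator fun a =>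
    ∫ x in Ici (0:ℝ), f x * ρY d (x - a / d + ((d - 1) / d) * h)


section ChiMonoAux

variable {d : ℕ} {hstar : ℝ} {χ : ℝ → ℝ}

lemma nu_def (d : ℕ) : ν d = gaussianReal 0 (varRoot d) := rfl

lemma rhoY_def (d : ℕ) : ρY d = gaussianPDFReal 0 (varY d) := rfl

lemma d_pos (hd : 2 ≤ d) : (0:ℝ) < d := by
  have : (2:ℝ) ≤ d := by exact_mod_cast hd
  linarith

lemma varRoot_coe (hd : 2 ≤ d) : ((varRoot d : ℝ≥0) : ℝ) = (d:ℝ) / ((d:ℝ) - 1) := by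
  have h1 : (1:ℝ≥0) ≤ (d:ℝ≥0) := by
    exact_mod_cast Nat.one_le_of_lt hd
  rw [varRoot, NNReal.coe_div, NNReal.coe_sub h1]
  push_cast
  ring_nf

lemma varY_coe (d : ℕ) : ((varY d : ℝ≥0) : ℝ) = ((d:ℝ) + 1) / d := by
  rw [varY, NNReal.coe_div]
  push_cast
  ring_nf

lemma varRoot_ne (hd : 2 ≤ d) : varRoot d ≠ 0 := by
  intro h
  have h2 := varRoot_coe hd
  rw [h] at h2
  have hd0 := d_pos hd
  have hd1 : (0:ℝ) < (d:ℝ) - 1 := by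
    have : (2:ℝ) ≤ d := by exact_mod_cast hd
    linarith
  have : (0:ℝ) < (d:ℝ) / ((d:ℝ) - 1) := div_pos hd0 hd1
  rw [← h2] at this
  simp at this

lemma varY_ne (hd : 2 ≤ d) : varY d ≠ 0 := by
  intro h
  have h2 := varY_coe d
  rw [h] at h2
  have hd0 := d_pos hd
  have : (0:ℝ) < ((d:ℝ) + 1) / d := div_pos (by linarith) hd0
  rw [← h2] at this
  simp at this

lemma chi_meas (hcrit : IsCriticalPair d hstar χ) : Measurable χ := by
  have hco : Continuous fun a => χ (max a hstar) :=
    hcrit.cont.comp_continuous (continuous_id.max continuous_const)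
      fun x => mem_Ici.2 (le_max_right _ _)
  have hrw : χ = (Ici hstar).indicator fun a => χ (max a hstar) := by
    funext a
    by_cases hA : hstar ≤ a
    · rw [Set.indicator_of_mem (mem_Ici.2 hA), max_eq_left hA]
    · rw [Set.indicator_of_notMem (by simpa using hA), hcrit.zero a (lt_of_not_ge hA)]
  rw [hrw]
  exact hco.measurable.indicator measurableSet_Ici

lemma eigen_eq (hcrit : IsCriticalPair d hstar χ) {a : ℝ} (ha : hstar ≤ a) :
    χ a = d * ∫ x in Ici hstar, χ x * ρY d (x - a / d) := by
  have h := hcrit.eigen a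
  rw [Lop, Set.indicator_of_mem (mem_Ici.2 ha)] at h
  exact h.symm

lemma eigen_integrable (hcrit : IsCriticalPair d hstar χ) {a : ℝ} (ha : hstar ≤ a) :
    IntegrableOn (fun x => χ x * ρY d (x - a / d)) (Ici hstar) := by
  by_contra hI
  have h0 : (∫ x in Ici hstar, χ x * ρY d (x - a / d)) = 0 := integral_undef hI
  have h := eigen_eq hcrit ha
  rw [h0, mul_zero] at h
  exact (hcrit.pos a ha).ne' h

lemma setIntegral_Ici_comp_sub (F : ℝ → ℝ) (h c : ℝ) :
    (∫ x in Ici h, F (x - c)) = ∫ y in Ici (h - c), F y := by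
  rw [← integral_indicator measurableSet_Ici, ← integral_indicator measurableSet_Ici]
  have : ∀ x : ℝ, (Ici h).indicator (fun x => F (x - c)) x
      = ((Ici (h - c)).indicator F) (x - c) := by
    intro x
    by_cases hx : h ≤ x
    · rw [Set.indicator_of_mem (mem_Ici.2 hx), Set.indicator_of_mem (mem_Ici.2 (by linarith))]
    · rw [Set.indicator_of_notMem (by simpa using hx),
        Set.indicator_of_notMem (by simp only [mem_Ici, not_le] at *; linarith)]
  simp_rw [this]
  exact integral_sub_right_eq_self ((Ici (h - c)).indicator F) c

lemma integrableOn_Ici_comp_add {F : ℝ → ℝ} {h c : ℝ}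
    (hF : IntegrableOn F (Ici h)) :
    IntegrableOn (fun x => F (x + c)) (Ici (h - c)) := by
  have h1 : Integrable ((Ici h).indicator F) volume :=
    (integrable_indicator_iff measurableSet_Ici).2 hF
  have h2 : Integrable (fun x => ((Ici h).indicator F) (x + c)) volume :=
    h1.comp_add_right c
  have h3 : (fun x => ((Ici h).indicator F) (x + c))
      = (Ici (h - c)).indicator fun x => F (x + c) := by
    funext x
    by_cases hx : h - c ≤ x
    · rw [Set.indicator_of_mem (mem_Ici.2 (by linarith)),
        Set.indicator_of_mem (mem_Ici.2 hx)]
    · rw [Set.indicator_of_notMem (by simp only [mem_Ici]; intro hc; exact hx (by linarith)),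
        Set.indicator_of_notMem (by simpa using hx)]
  rw [h3] at h2
  exact (integrable_indicator_iff measurableSet_Ici).1 h2

/-- The core pointwise inequality from the eigen-equation and a change of variables. -/
lemma core_ineq (hd : 2 ≤ d) (hcrit : IsCriticalPair d hstar χ)
    {s a : ℝ} (hs : 0 < s) (ha : hstar ≤ a) :
    χ a - χ (a + s) ≤
      d * ∫ x in Ici hstar, max (χ x - χ (x + s / d)) 0 * ρY d (x - a / d) := by
  have hd0 := d_pos hd
  have hg0 : ∀ u : ℝ, 0 ≤ ρY d u := fun u => gaussianPDFReal_nonneg 0 (varY d) u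
  -- B = ∫ over Ici hstar of χ x * g (x - (a+s)/d)
  have hB : (∫ x in Ici hstar, χ x * ρY d (x - (a + s) / d))
      = ∫ y in Ici (hstar - s / d), χ (y + s / d) * ρY d (y - a / d) := by
    have : ∀ x : ℝ, χ x * ρY d (x - (a + s) / d)
        = (fun y => χ (y + s / d) * ρY d (y - a / d)) (x - s / d) := by
      intro x
      simp only []
      rw [sub_add_cancel]
      have : x - (a + s) / d = x - s / d - a / d := by field_simp; ring
      rw [this]
    simp_rw [this]
    exact setIntegral_Ici_comp_sub (fun y => χ (y + s / d) * ρY d (y - a / d)) hstar (s / d)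
  have hGint : IntegrableOn (fun y => χ (y + s / d) * ρY d (y - a / d))
      (Ici (hstar - s / d)) := by
    have h1 := eigen_integrable hcrit (le_trans ha (by linarith : a ≤ a + s))
    have h2 := integrableOn_Ici_comp_add (c := s / d) h1
    have h3 : (fun x => χ (x + s / d) * ρY d (x + s / d - (a + s) / d))
        = fun y => χ (y + s / d) * ρY d (y - a / d) := by
      funext y
      have : y + s / d - (a + s) / d = y - a / d := by field_simp; ring
      rw [this]
    rwa [h3] at h2
  have hGint' : IntegrableOn (fun y => χ (y + s / d) * ρY d (y - a / d)) (Ici hstar) :=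
    hGint.mono_set (Ici_subset_Ici.2 (by linarith [div_nonneg hs.le hd0.le]))
  have hBge : (∫ y in Ici hstar, χ (y + s / d) * ρY d (y - a / d))
      ≤ ∫ x in Ici hstar, χ x * ρY d (x - (a + s) / d) := by
    rw [hB]
    refine setIntegral_mono_set hGint ?_ ?_
    · exact Filter.Eventually.of_forall fun y =>
        mul_nonneg (hcrit.nonneg _) (hg0 _)
    · exact HasSubset.Subset.eventuallyLE (Ici_subset_Ici.2 (by linarith [div_nonneg hs.le hd0.le]))
  have hAint := eigen_integrable hcrit ha
  have hMax : IntegrableOn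
      (fun x => max (χ x - χ (x + s / d)) 0 * ρY d (x - a / d)) (Ici hstar) := by
    refine Integrable.mono' hAint ?_ ?_
    · exact (((chi_meas hcrit).sub ((chi_meas hcrit).comp
        (measurable_id.add_const (s / d)))).max measurable_const).mul
        ((measurable_gaussianPDFReal 0 (varY d)).comp
          (measurable_id.sub_const (a / d))) |>.aestronglyMeasurable
    · refine Filter.Eventually.of_forall fun x => ?_
      rw [Real.norm_eq_abs, abs_of_nonneg (mul_nonneg (le_max_right _ _) (hg0 _))]
      refine mul_le_mul_of_nonneg_right ?_ (hg0 _)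
      exact max_le (by linarith [hcrit.nonneg (x + s / d)]) (hcrit.nonneg x)
  have hdiff : χ a - χ (a + s)
      ≤ d * ∫ x in Ici hstar, (χ x - χ (x + s / d)) * ρY d (x - a / d) := by
    rw [eigen_eq hcrit ha, eigen_eq hcrit (by linarith : hstar ≤ a + s)]
    rw [← mul_sub]
    refine mul_le_mul_of_nonneg_left ?_ hd0.le
    have hsub : (∫ x in Ici hstar, χ x * ρY d (x - a / d))
        - (∫ x in Ici hstar, χ (x + s / d) * ρY d (x - a / d))
        = ∫ x in Ici hstar, (χ x - χ (x + s / d)) * ρY d (x - a / d) := by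
      rw [← integral_sub hAint hGint']
      congr 1
      funext x
      ring
    have := sub_le_sub_left hBge (∫ x in Ici hstar, χ x * ρY d (x - a / d))
    calc (∫ x in Ici hstar, χ x * ρY d (x - a / d))
          - (∫ x in Ici hstar, χ x * ρY d (x - (a + s) / d))
        ≤ (∫ x in Ici hstar, χ x * ρY d (x - a / d))
          - (∫ x in Ici hstar, χ (x + s / d) * ρY d (x - a / d)) := this
      _ = _ := hsub
  refine hdiff.trans (mul_le_mul_of_nonneg_left ?_ hd0.le)
  refine setIntegral_mono_on ?_ hMax measurableSet_Ici fun x _ => ?_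
  · exact hAint.sub hGint' |>.congr (Filter.Eventually.of_forall fun x => by
      simp only [Pi.sub_apply]; ring)
  · exact mul_le_mul_of_nonneg_right (le_max_left _ _) (hg0 _)

/-- Kernel symmetry: `ρY (x - a/d) ρν(a) = ρY (a - x/d) ρν(x)`. -/
lemma kernel_symm (hd : 2 ≤ d) (a x : ℝ) :
    ρY d (x - a / d) * gaussianPDFReal 0 (varRoot d) a
      = ρY d (a - x / d) * gaussianPDFReal 0 (varRoot d) x := by
  have hd0 := d_pos hd
  have hd1 : (0:ℝ) < (d:ℝ) - 1 := by
    have : (2:ℝ) ≤ d := by exact_mod_cast hd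
    linarith
  have hdp1 : (0:ℝ) < (d:ℝ) + 1 := by linarith
  have hY := varY_coe d
  have hR := varRoot_coe hd
  rw [rhoY_def]
  simp only [gaussianPDFReal, sub_zero]
  rw [mul_mul_mul_comm, ← Real.exp_add, mul_mul_mul_comm, ← Real.exp_add]
  congr 1
  rw [hY, hR]
  field_simp
  ring

end ChiMonoAux


section ChiMonoMain

variable {d : ℕ} {hstar : ℝ} {χ : ℝ → ℝ}

lemma nu_setLIntegral (hd : 2 ≤ d) (hstar : ℝ) {F : ℝ → ℝ≥0∞} (hF : Measurable F) :
    ∫⁻ a in Ici hstar, F a ∂(ν d)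
      = ∫⁻ a in Ici hstar, ENNReal.ofReal (gaussianPDFReal 0 (varRoot d) a) * F a := by
  rw [nu_def, gaussianReal_of_var_ne_zero _ (varRoot_ne hd),
    restrict_withDensity measurableSet_Ici,
    lintegral_withDensity_eq_lintegral_mul _ (measurable_gaussianPDF _ _) hF]
  rfl

lemma pairing_eq (hd : 2 ≤ d) (hcrit : IsCriticalPair d hstar χ)
    (f : ℝ → ℝ) (hfm : Measurable f) (hf0 : ∀ x, 0 ≤ f x) (hfχ : ∀ x, f x ≤ χ x) :
    ∫⁻ a in Ici hstar,
        ENNReal.ofReal ((d * ∫ x in Ici hstar, f x * ρY d (x - a / d)) * χ a) ∂(ν d)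
      = ∫⁻ x in Ici hstar, ENNReal.ofReal (f x * χ x) ∂(ν d) := by
  have hd0 := d_pos hd
  have hχm := chi_meas hcrit
  have hgm : Measurable (ρY d) := measurable_gaussianPDFReal 0 (varY d)
  have hρm := measurable_gaussianPDFReal 0 (varRoot d)
  have hg0 : ∀ u : ℝ, 0 ≤ ρY d u := fun u => gaussianPDFReal_nonneg 0 (varY d) u
  have hρ0 : ∀ u : ℝ, 0 ≤ gaussianPDFReal 0 (varRoot d) u := fun u =>
    gaussianPDFReal_nonneg _ _ u
  have hfint : ∀ a : ℝ, hstar ≤ a →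
      IntegrableOn (fun x => f x * ρY d (x - a / d)) (Ici hstar) := by
    intro a ha
    refine Integrable.mono' (eigen_integrable hcrit ha)
      ((hfm.mul (hgm.comp (measurable_id.sub_const _))).aestronglyMeasurable) ?_
    refine Filter.Eventually.of_forall fun x => ?_
    rw [Real.norm_eq_abs, abs_of_nonneg (mul_nonneg (hf0 x) (hg0 _))]
    exact mul_le_mul_of_nonneg_right (hfχ x) (hg0 _)
  have step1 : ∀ a : ℝ, hstar ≤ a →
      ENNReal.ofReal ((d * ∫ x in Ici hstar, f x * ρY d (x - a / d)) * χ a)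
        = ∫⁻ x in Ici hstar, ENNReal.ofReal (f x * ρY d (x - a / d) * (d * χ a)) := by
    intro a ha
    rw [← ofReal_integral_eq_lintegral_ofReal ((hfint a ha).mul_const _)
      (Filter.Eventually.of_forall fun x =>
        mul_nonneg (mul_nonneg (hf0 x) (hg0 _)) (mul_nonneg hd0.le (hcrit.nonneg a)))]
    rw [integral_mul_const]
    congr 1
    ring
  have hk1 : Measurable fun p : ℝ × ℝ =>
      ENNReal.ofReal (f p.2 * ρY d (p.2 - p.1 / d) * (d * χ p.1)) := by
    refine Measurable.ennreal_ofReal ?_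
    exact ((hfm.comp measurable_snd).mul
      (hgm.comp (measurable_snd.sub (measurable_fst.div_const _)))).mul
      ((hχm.comp measurable_fst).const_mul d)
  have hk2 : Measurable fun p : ℝ × ℝ =>
      ENNReal.ofReal (gaussianPDFReal 0 (varRoot d) p.1 *
        (f p.2 * ρY d (p.2 - p.1 / d) * (d * χ p.1))) := by
    refine Measurable.ennreal_ofReal ?_
    exact (hρm.comp measurable_fst).mul (((hfm.comp measurable_snd).mul
      (hgm.comp (measurable_snd.sub (measurable_fst.div_const _)))).mul
      ((hχm.comp measurable_fst).const_mul d))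
  have hFmeas : Measurable fun a : ℝ =>
      ∫⁻ x in Ici hstar, ENNReal.ofReal (f x * ρY d (x - a / d) * (d * χ a)) :=
    Measurable.lintegral_prod_right hk1
  calc ∫⁻ a in Ici hstar,
        ENNReal.ofReal ((d * ∫ x in Ici hstar, f x * ρY d (x - a / d)) * χ a) ∂(ν d)
      = ∫⁻ a in Ici hstar,
          (∫⁻ x in Ici hstar, ENNReal.ofReal (f x * ρY d (x - a / d) * (d * χ a))) ∂(ν d) := by
        refine setLIntegral_congr_fun measurableSet_Ici
          (fun a ha => ?_)
        exact step1 a ha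
    _ = ∫⁻ a in Ici hstar, ENNReal.ofReal (gaussianPDFReal 0 (varRoot d) a) *
          ∫⁻ x in Ici hstar, ENNReal.ofReal (f x * ρY d (x - a / d) * (d * χ a)) :=
        nu_setLIntegral hd hstar hFmeas
    _ = ∫⁻ a in Ici hstar, ∫⁻ x in Ici hstar,
          ENNReal.ofReal (gaussianPDFReal 0 (varRoot d) a *
            (f x * ρY d (x - a / d) * (d * χ a))) := by
        refine setLIntegral_congr_fun measurableSet_Ici
          (fun a _ => ?_)
        rw [← lintegral_const_mul' _ _ ENNReal.ofReal_ne_top]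
        exact lintegral_congr fun x => (ENNReal.ofReal_mul (hρ0 a)).symm
    _ = ∫⁻ x in Ici hstar, ∫⁻ a in Ici hstar,
          ENNReal.ofReal (gaussianPDFReal 0 (varRoot d) a *
            (f x * ρY d (x - a / d) * (d * χ a))) :=
        lintegral_lintegral_swap hk2.aemeasurable
    _ = ∫⁻ x in Ici hstar, ENNReal.ofReal (gaussianPDFReal 0 (varRoot d) x) *
          ENNReal.ofReal (f x * χ x) := by
        refine setLIntegral_congr_fun measurableSet_Ici
          (fun x hx => ?_)
        have hrw : ∀ a : ℝ, gaussianPDFReal 0 (varRoot d) a *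
            (f x * ρY d (x - a / d) * (d * χ a))
            = (f x * gaussianPDFReal 0 (varRoot d) x) * (d * (χ a * ρY d (a - x / d))) := by
          intro a
          have hsym := kernel_symm hd a x
          linear_combination (f x * d * χ a) * hsym
        calc (∫⁻ a in Ici hstar, ENNReal.ofReal (gaussianPDFReal 0 (varRoot d) a *
                (f x * ρY d (x - a / d) * (d * χ a))))
            = ∫⁻ a in Ici hstar, ENNReal.ofReal (f x * gaussianPDFReal 0 (varRoot d) x) *
                ENNReal.ofReal (d * (χ a * ρY d (a - x / d))) := by
              refine lintegral_congr fun a => ?_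
              rw [hrw a, ENNReal.ofReal_mul (mul_nonneg (hf0 x) (hρ0 x))]
          _ = ENNReal.ofReal (f x * gaussianPDFReal 0 (varRoot d) x) *
                ∫⁻ a in Ici hstar, ENNReal.ofReal (d * (χ a * ρY d (a - x / d))) :=
              lintegral_const_mul' _ _ ENNReal.ofReal_ne_top
          _ = ENNReal.ofReal (f x * gaussianPDFReal 0 (varRoot d) x) *
                ENNReal.ofReal (χ x) := by
              congr 1
              rw [← ofReal_integral_eq_lintegral_ofReal
                ((eigen_integrable hcrit hx).const_mul (d : ℝ))
                (Filter.Eventually.of_forall fun t =>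
                  mul_nonneg hd0.le (mul_nonneg (hcrit.nonneg t) (hg0 _)))]
              congr 1
              rw [integral_const_mul]
              exact (eigen_eq hcrit hx).symm
          _ = ENNReal.ofReal (gaussianPDFReal 0 (varRoot d) x) *
                ENNReal.ofReal (f x * χ x) := by
              rw [← ENNReal.ofReal_mul (mul_nonneg (hf0 x) (hρ0 x)),
                ← ENNReal.ofReal_mul (hρ0 x)]
              congr 1
              ring
    _ = ∫⁻ x in Ici hstar, ENNReal.ofReal (f x * χ x) ∂(ν d) :=
        (nu_setLIntegral hd hstar (Measurable.ennreal_ofReal (hfm.mul hχm))).symm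

/-- `Φ(s) = ∫ (χ(a) - χ(a+s))⁺ χ(a) dν` over `[h*, ∞)`. -/
def Phi (d : ℕ) (hstar : ℝ) (χ : ℝ → ℝ) (t : ℝ) : ℝ≥0∞ :=
  ∫⁻ a in Ici hstar, ENNReal.ofReal (max (χ a - χ (a + t)) 0 * χ a) ∂(ν d)

lemma Phi_step (hd : 2 ≤ d) (hcrit : IsCriticalPair d hstar χ) {s : ℝ} (hs : 0 < s) :
    Phi d hstar χ s ≤ Phi d hstar χ (s / d) := by
  have hd0 := d_pos hd
  set f : ℝ → ℝ := fun x => max (χ x - χ (x + s / d)) 0 with hf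
  have hfm : Measurable f := ((chi_meas hcrit).sub
    ((chi_meas hcrit).comp (measurable_id.add_const _))).max measurable_const
  have hf0 : ∀ x, 0 ≤ f x := fun x => le_max_right _ _
  have hfχ : ∀ x, f x ≤ χ x := fun x =>
    max_le (by linarith [hcrit.nonneg (x + s / d)]) (hcrit.nonneg x)
  calc Phi d hstar χ s
      ≤ ∫⁻ a in Ici hstar,
          ENNReal.ofReal ((d * ∫ x in Ici hstar, f x * ρY d (x - a / d)) * χ a) ∂(ν d) := by
        refine lintegral_mono_ae ((ae_restrict_iff' measurableSet_Ici).2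
          (Filter.Eventually.of_forall fun a ha => ?_))
        refine ENNReal.ofReal_le_ofReal (mul_le_mul_of_nonneg_right ?_ (hcrit.nonneg a))
        refine max_le ?_ ?_
        · exact core_ineq hd hcrit hs ha
        · exact mul_nonneg hd0.le (setIntegral_nonneg measurableSet_Ici fun x _ =>
            mul_nonneg (hf0 x) (gaussianPDFReal_nonneg _ _ _))
    _ = ∫⁻ x in Ici hstar, ENNReal.ofReal (f x * χ x) ∂(ν d) :=
        pairing_eq hd hcrit f hfm hf0 hfχ
    _ = Phi d hstar χ (s / d) := rfl

lemma chisq_integrable (hcrit : IsCriticalPair d hstar χ) :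
    Integrable (fun a => χ a * χ a) (ν d) := by
  by_contra hI
  have h0 : (∫ a, χ a ^ 2 ∂(ν d)) = 0 := by
    refine integral_undef fun hint => hI ?_
    refine hint.congr (Filter.Eventually.of_forall fun a => ?_)
    show χ a ^ 2 = χ a * χ a
    ring
  rw [hcrit.norm] at h0
  norm_num at h0

lemma Phi_zero (hd : 2 ≤ d) (hcrit : IsCriticalPair d hstar χ) {s : ℝ} (hs : 0 < s) :
    Phi d hstar χ s = 0 := by
  have hd0 := d_pos hd
  have hpow : ∀ n : ℕ, Phi d hstar χ s ≤ Phi d hstar χ (s / (d : ℝ) ^ n) := by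
    intro n
    induction n with
    | zero => simp
    | succ n ih =>
      refine ih.trans ?_
      have h := Phi_step hd hcrit (div_pos hs (pow_pos hd0 n))
      rwa [div_div, ← pow_succ] at h
  have hbound : (∫⁻ a in Ici hstar, ENNReal.ofReal (χ a * χ a) ∂(ν d)) ≠ ⊤ := by
    refine ne_of_lt (lt_of_le_of_lt (lintegral_mono' Measure.restrict_le_self le_rfl) ?_)
    exact (chisq_integrable hcrit).lintegral_lt_top
  have hmeasn : ∀ n : ℕ, Measurable fun a =>
      ENNReal.ofReal (max (χ a - χ (a + s / (d : ℝ) ^ n)) 0 * χ a) := by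
    intro n
    exact (((((chi_meas hcrit).sub ((chi_meas hcrit).comp
      (measurable_id.add_const _))).max measurable_const).mul
      (chi_meas hcrit))).ennreal_ofReal
  have htend : Filter.Tendsto (fun n => Phi d hstar χ (s / (d : ℝ) ^ n))
      Filter.atTop (𝓝 0) := by
    have h := tendsto_lintegral_of_dominated_convergence
      (μ := (ν d).restrict (Ici hstar))
      (F := fun n a => ENNReal.ofReal (max (χ a - χ (a + s / (d : ℝ) ^ n)) 0 * χ a))
      (f := fun _ => 0)
      (bound := fun a => ENNReal.ofReal (χ a * χ a))
      hmeasn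
      (fun n => Filter.Eventually.of_forall fun a => by
        refine ENNReal.ofReal_le_ofReal (mul_le_mul_of_nonneg_right ?_ (hcrit.nonneg a))
        exact max_le (by linarith [hcrit.nonneg (a + s / (d : ℝ) ^ n)]) (hcrit.nonneg a))
      hbound
      ?_
    · simpa [Phi] using h
    · refine (ae_restrict_iff' measurableSet_Ici).2
        (Filter.Eventually.of_forall fun a ha => ?_)
      have ha' : hstar ≤ a := ha
      have h1 : Filter.Tendsto (fun n : ℕ => s / (d : ℝ) ^ n) Filter.atTop (𝓝 0) := by
        have hlt : (d : ℝ)⁻¹ < 1 := by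
          rw [inv_lt_one_iff₀]
          right
          have : (2:ℝ) ≤ d := by exact_mod_cast hd
          linarith
        have h2 := tendsto_pow_atTop_nhds_zero_of_lt_one (by positivity) hlt
        have h3 := h2.const_mul s
        simpa [div_eq_mul_inv, inv_pow, mul_zero] using h3
      have h2 : Filter.Tendsto (fun n : ℕ => a + s / (d : ℝ) ^ n) Filter.atTop
          (𝓝[Ici hstar] a) := by
        rw [tendsto_nhdsWithin_iff]
        constructor
        · have := Filter.Tendsto.const_add a h1
          simpa using this
        · refine Filter.Eventually.of_forall fun n => ?_
          have : 0 ≤ s / (d : ℝ) ^ n := le_of_lt (div_pos hs (pow_pos hd0 n))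
          simp only [mem_Ici]
          linarith
      have h3 : Filter.Tendsto (fun n : ℕ => χ (a + s / (d : ℝ) ^ n)) Filter.atTop
          (𝓝 (χ a)) := (hcrit.cont a ha').tendsto.comp h2
      have h4 : Filter.Tendsto
          (fun n : ℕ => max (χ a - χ (a + s / (d : ℝ) ^ n)) 0 * χ a) Filter.atTop
          (𝓝 0) := by
        have h40 : Filter.Tendsto
            (fun n : ℕ => max (χ a - χ (a + s / (d : ℝ) ^ n)) 0 * χ a) Filter.atTop
            (𝓝 (max (χ a - χ a) 0 * χ a)) :=
          (((tendsto_const_nhds (x := χ a)).sub h3).max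
            (tendsto_const_nhds (x := (0:ℝ)))).mul (tendsto_const_nhds (x := χ a))
        simpa [sub_self] using h40
      have h5 := (ENNReal.tendsto_ofReal h4)
      simpa using h5
  have hle : Phi d hstar χ s ≤ 0 := ge_of_tendsto htend (Filter.Eventually.of_forall hpow)
  exact le_antisymm hle zero_le

lemma chi_mono_step (hd : 2 ≤ d) (hcrit : IsCriticalPair d hstar χ)
    {s a : ℝ} (hs : 0 < s) (ha : hstar ≤ a) : χ a ≤ χ (a + s) := by
  by_contra hlt'
  have hlt : χ (a + s) < χ a := lt_of_not_ge hlt'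
  set G : ℝ → ℝ := fun b => max (χ b - χ (b + s)) 0 * χ b with hG
  have hGm : Measurable fun b => ENNReal.ofReal (G b) :=
    ((((chi_meas hcrit).sub ((chi_meas hcrit).comp
      (measurable_id.add_const _))).max measurable_const).mul (chi_meas hcrit)).ennreal_ofReal
  have hPhi : Phi d hstar χ s = 0 := Phi_zero hd hcrit hs
  have hae : (fun b => ENNReal.ofReal (G b)) =ᵐ[(ν d).restrict (Ici hstar)] 0 :=
    (lintegral_eq_zero_iff hGm).1 hPhi
  have hae2 : ∀ᵐ b ∂((ν d).restrict (Ici hstar)), ENNReal.ofReal (G b) = 0 := hae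
  have hae' : ((ν d).restrict (Ici hstar)) {b | ¬ ENNReal.ofReal (G b) = 0} = 0 :=
    ae_iff.1 hae2
  -- G is positive near a
  have hGpos : 0 < G a := by
    refine mul_pos ?_ (hcrit.pos a ha)
    exact lt_max_iff.2 (Or.inl (sub_pos.2 hlt))
  have hGc : ContinuousWithinAt G (Ici hstar) a := by
    have h1 : ContinuousWithinAt χ (Ici hstar) a := hcrit.cont a ha
    have h2 : ContinuousWithinAt (fun b => χ (b + s)) (Ici hstar) a := by
      have hmap : MapsTo (fun b : ℝ => b + s) (Ici hstar) (Ici hstar) := fun b hb => by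
        simp only [mem_Ici] at *
        linarith
      exact ContinuousWithinAt.comp
        (hcrit.cont (a + s) (by simp only [mem_Ici]; linarith))
        ((continuous_id.add continuous_const).continuousWithinAt) hmap
    exact ((h1.sub h2).max continuousWithinAt_const).mul h1
  have hev : ∀ᶠ b in 𝓝[Ici hstar] a, 0 < G b :=
    hGc.eventually (eventually_gt_nhds hGpos)
  obtain ⟨ε, hε, hball⟩ := Metric.mem_nhdsWithin_iff.1 hev
  have hTS : Ioo a (a + ε) ⊆ Ici hstar := fun b hb => le_trans ha (le_of_lt hb.1)
  have hsub : Ioo a (a + ε) ⊆ {b | ¬ ENNReal.ofReal (G b) = 0} := by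
    intro b hb
    have hd1 : b ∈ Metric.ball a ε := by
      rw [Metric.mem_ball, Real.dist_eq, abs_of_pos (sub_pos.2 hb.1)]
      linarith [hb.2]
    have hpos : 0 < G b := hball ⟨hd1, hTS hb⟩
    simp only [mem_setOf_eq, ENNReal.ofReal_eq_zero, not_le]
    exact hpos
  have hT0 : (ν d) (Ioo a (a + ε)) = 0 := by
    have h := measure_mono_null hsub hae'
    rwa [Measure.restrict_apply measurableSet_Ioo,
      Set.inter_eq_self_of_subset_left hTS] at h
  have hvol : volume (Ioo a (a + ε)) = 0 :=
    gaussianReal_absolutelyContinuous' 0 (varRoot_ne hd) hT0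
  rw [Real.volume_Ioo] at hvol
  simp only [add_sub_cancel_left, ENNReal.ofReal_eq_zero] at hvol
  linarith

end ChiMonoMain

/-- the critical eigenfunction `χ = χ_{h*}` is non-decreasing:
for all `a ≤ b`, `χ(a) ≤ χ(b)`. -/
theorem chi_monotone (d : ℕ) (hd : 2 ≤ d)
    (hstar : ℝ) (χ : ℝ → ℝ) (hcrit : IsCriticalPair d hstar χ) :
    Monotone χ := by
  intro a b hab
  rcases eq_or_lt_of_le hab with rfl | hlt
  · exact le_refl _
  by_cases ha : hstar ≤ a
  · have h := chi_mono_step hd hcrit (sub_pos.2 hlt) ha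
    rwa [add_sub_cancel] at h
  · rw [hcrit.zero a (lt_of_not_ge ha)]
    exact hcrit.nonneg b

end GFF
end
end

section
/- Let ρ be any centred Gaussian density on ℝ. Then there exist constants r, c ∈ (0,∞) such that for all x ∈ ℝ and all s with 0 < |s| < 1, |(ρ(x + s) − ρ(x))/s| ≤ c (ρ(x + r) + ρ(x − r)). -/
open MeasureTheory ProbabilityTheory Real Set Filter Topology NNReal
open scoped Classical ENNReal

noncomputable section

lemma gauss_hasDerivAt (v : ℝ≥0) (hv : 0 < v) (x : ℝ) :
    HasDerivAt (gaussianPDFReal 0 v) (-(x / v) * gaussianPDFReal 0 v x) x := by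
  have hv' : (0:ℝ) < v := hv
  have h1 : HasDerivAt (fun y : ℝ => -(y - 0)^2 / (2*(v:ℝ))) (-(x/v)) x := by
    have h := (((hasDerivAt_id x).sub_const 0).pow 2).neg.div_const (2*(v:ℝ))
    refine h.congr_deriv ?_
    field_simp
    simp
  have h2 := (h1.exp).const_mul ((√(2 * π * (v:ℝ)))⁻¹ : ℝ)
  have h3 : -(x/(v:ℝ)) * gaussianPDFReal 0 v x
      = (√(2 * π * (v:ℝ)))⁻¹ * (Real.exp (-(x - 0)^2/(2*(v:ℝ))) * (-(x/(v:ℝ)))) := by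
    rw [gaussianPDFReal]; ring
  rw [h3]
  exact h2

lemma gauss_even (v : ℝ≥0) (y : ℝ) :
    gaussianPDFReal 0 v (-y) = gaussianPDFReal 0 v y := by
  rw [gaussianPDFReal, gaussianPDFReal]; ring_nf

lemma key_half (v : ℝ≥0) (hv : 0 < v) {x ξ : ℝ} (hx : 0 ≤ x) (h : |ξ - x| ≤ 1) :
    |ξ| / v * gaussianPDFReal 0 v ξ ≤
      Real.exp (5/(2*(v:ℝ))) * gaussianPDFReal 0 v (x - 2) := by
  have hv' : (0:ℝ) < v := hv
  set K := (√(2 * π * (v:ℝ)))⁻¹ with hKdef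
  have hK : 0 < K := inv_pos.mpr (Real.sqrt_pos.mpr (by positivity))
  have habs := abs_le.mp h
  have hA : (x-2)^2 + 2*|ξ| ≤ ξ^2 + 5 := by
    rcases abs_cases ξ with ⟨he, h0⟩ | ⟨he, h0⟩
    · rw [he]
      nlinarith [mul_nonneg hx (show (0:ℝ) ≤ x + 1 - ξ by linarith),
        sq_nonneg (ξ - x + 1), mul_nonneg h0 (show (0:ℝ) ≤ x + 1 - ξ by linarith)]
    · rw [he]
      nlinarith [sq_nonneg ξ, sq_nonneg (x - 2)]
  have hB : |ξ|/(v:ℝ) ≤ Real.exp (|ξ|/(v:ℝ)) := by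
    have := Real.add_one_le_exp (|ξ|/(v:ℝ)); linarith
  have hg : gaussianPDFReal 0 v ξ = K * Real.exp (-ξ^2/(2*(v:ℝ))) := by
    rw [gaussianPDFReal, sub_zero]
  have hg2 : gaussianPDFReal 0 v (x-2) = K * Real.exp (-(x-2)^2/(2*(v:ℝ))) := by
    rw [gaussianPDFReal, sub_zero]
  rw [hg, hg2]
  calc |ξ|/(v:ℝ) * (K * Real.exp (-ξ^2/(2*(v:ℝ))))
      ≤ Real.exp (|ξ|/(v:ℝ)) * (K * Real.exp (-ξ^2/(2*(v:ℝ)))) := by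
        apply mul_le_mul_of_nonneg_right hB (by positivity)
    _ = K * Real.exp (|ξ|/(v:ℝ) + -ξ^2/(2*(v:ℝ))) := by rw [Real.exp_add]; ring
    _ ≤ K * Real.exp (5/(2*(v:ℝ)) + -(x-2)^2/(2*(v:ℝ))) := by
        apply mul_le_mul_of_nonneg_left _ hK.le
        apply Real.exp_le_exp.mpr
        have e1 : |ξ|/(v:ℝ) + -ξ^2/(2*(v:ℝ)) = (2*|ξ| - ξ^2)/(2*(v:ℝ)) := by
          field_simp; ring
        have e2 : 5/(2*(v:ℝ)) + -(x-2)^2/(2*(v:ℝ)) = (5 - (x-2)^2)/(2*(v:ℝ)) := by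
          field_simp; ring
        rw [e1, e2]
        exact (div_le_div_iff_of_pos_right (by positivity)).mpr (by linarith)
    _ = Real.exp (5/(2*(v:ℝ))) * (K * Real.exp (-(x-2)^2/(2*(v:ℝ)))) := by
        rw [Real.exp_add]; ring

lemma key_bound (v : ℝ≥0) (hv : 0 < v) {x ξ : ℝ} (h : |ξ - x| ≤ 1) :
    |ξ| / v * gaussianPDFReal 0 v ξ ≤
      Real.exp (5/(2*(v:ℝ))) * (gaussianPDFReal 0 v (x + 2) + gaussianPDFReal 0 v (x - 2)) := by
  have hE : 0 < Real.exp (5/(2*(v:ℝ))) := Real.exp_pos _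
  rcases le_or_gt 0 x with hx | hx
  · have := key_half v hv hx h
    have h2 := gaussianPDFReal_nonneg 0 v (x + 2)
    nlinarith
  · have h' : |(-ξ) - (-x)| ≤ 1 := by rw [show (-ξ) - (-x) = -(ξ - x) by ring, abs_neg]; exact h
    have := key_half v hv (by linarith : (0:ℝ) ≤ -x) h'
    rw [abs_neg, gauss_even, show (-x) - 2 = -(x+2) by ring, gauss_even] at this
    have h2 := gaussianPDFReal_nonneg 0 v (x - 2)
    nlinarith

/-- Lemma `phi_dominant`: for every centred Gaussian density `ρ`
(variance `v > 0`) there are `r, c ∈ (0,∞)` such that for all `x ∈ ℝ` and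
`0 < |s| < 1`, `|(ρ(x+s) − ρ(x))/s| ≤ c (ρ(x+r) + ρ(x−r))`. -/
theorem gaussian_density_difference_bound (v : ℝ≥0) (hv : 0 < v) :
    ∃ r c : ℝ, 0 < r ∧ 0 < c ∧ ∀ x s : ℝ, s ≠ 0 → |s| < 1 →
      |(gaussianPDFReal 0 v (x + s) - gaussianPDFReal 0 v x) / s| ≤
        c * (gaussianPDFReal 0 v (x + r) + gaussianPDFReal 0 v (x - r)) := by
  have hv' : (0:ℝ) < v := hv
  refine ⟨2, Real.exp (5/(2*(v:ℝ))), by norm_num, Real.exp_pos _, fun x s hs hs1 => ?_⟩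
  have hcont : ∀ (a b : ℝ), ContinuousOn (gaussianPDFReal 0 v) (Icc a b) :=
    fun a b => fun y _ => (gauss_hasDerivAt v hv y).continuousAt.continuousWithinAt
  have hderiv : ∀ y : ℝ, HasDerivAt (gaussianPDFReal 0 v)
      (-(y / v) * gaussianPDFReal 0 v y) y := gauss_hasDerivAt v hv
  -- get ξ from MVT with |ξ - x| ≤ 1 and slope equality
  have main : ∃ ξ : ℝ, |ξ - x| ≤ 1 ∧
      (gaussianPDFReal 0 v (x + s) - gaussianPDFReal 0 v x) / s
        = -(ξ / v) * gaussianPDFReal 0 v ξ := by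
    rcases hs.lt_or_gt with hneg | hpos
    · obtain ⟨ξ, hξ, hd⟩ := exists_hasDerivAt_eq_slope (gaussianPDFReal 0 v)
        (fun y => -(y / v) * gaussianPDFReal 0 v y)
        (show x + s < x by linarith) (hcont _ _) (fun y _ => hderiv y)
      refine ⟨ξ, ?_, ?_⟩
      · rw [abs_le]
        have := abs_lt.mp hs1
        constructor <;> [linarith [hξ.1]; linarith [hξ.2]]
      · rw [hd, show x - (x + s) = -s by ring, div_neg, ← neg_div, neg_sub]
    · obtain ⟨ξ, hξ, hd⟩ := exists_hasDerivAt_eq_slope (gaussianPDFReal 0 v)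
        (fun y => -(y / v) * gaussianPDFReal 0 v y)
        (show x < x + s by linarith) (hcont _ _) (fun y _ => hderiv y)
      refine ⟨ξ, ?_, ?_⟩
      · rw [abs_le]
        have := abs_lt.mp hs1
        constructor <;> [linarith [hξ.1]; linarith [hξ.2]]
      · rw [hd]
        rw [show x + s - x = s by ring]
    
  obtain ⟨ξ, hξ1, hξ2⟩ := main
  rw [hξ2]
  have habs : |(-(ξ / (v:ℝ))) * gaussianPDFReal 0 v ξ| = |ξ|/(v:ℝ) * gaussianPDFReal 0 v ξ := by
    rw [abs_mul, abs_neg, abs_div, abs_of_pos hv',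
      abs_of_nonneg (gaussianPDFReal_nonneg 0 v ξ)]
  rw [habs]
  exact key_bound v hv hξ1

end
end
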